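/- Let σ > 0, r > 0, ξ ∈ ℝ, and p ∈ ℕ. Define f : ℝ → ℝ by f(u) = exp(−(u−ξ)²/(2·√r·σ²))·He_p(√2·(u−ξ)/(r^{1/4}·σ)). Then f is twice differentiable and, for all real u, (((u−ξ)² − √r·σ²)/(2·r·σ²))·f(u) − (σ²/2)·f″(u) = (p/√r)·f(u). That is, f is an eigenfunction of the self-adjoint local operator L̃_loc of the linearized mean-field game with eigenvalue p/√r. -/

import Mathlib

open Polynomial



theorem my_derivative_hermite : ∀ n : ℕ, derivative (hermite n) = n * hermite (n - 1)
  | 0 => by simp [hermite_zero]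
  | 1 => by simp [hermite_one, hermite_zero]
  | (n + 2) => by
    have ih1 := my_derivative_hermite (n + 1)
    simp only [Nat.add_sub_cancel] at ih1 ⊢
    have hs : derivative (hermite n) = X * hermite n - hermite (n + 1) := by
      rw [hermite_succ]; ring
    rw [hermite_succ (n + 1), derivative_sub, derivative_mul, derivative_X, one_mul, ih1,
      derivative_mul, hs, Polynomial.derivative_natCast]
    push_cast
    ring

theorem hermite_ode (p : ℕ) : derivative (derivative (hermite p)) =
    X * derivative (hermite p) - (p : Polynomial ℤ) * hermite p := by
  have hs : derivative (hermite p) = X * hermite p - hermite (p + 1) := by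
    rw [hermite_succ]; ring
  have h1 := my_derivative_hermite (p + 1)
  simp only [Nat.add_sub_cancel] at h1
  rw [hs, derivative_sub, derivative_mul, derivative_X, one_mul, h1, hs]
  push_cast
  ring

noncomputable def gg (p : ℕ) : ℝ → ℝ := fun y => Real.exp (-y^2/4) * aeval y (hermite p)
noncomputable def gg1 (p : ℕ) : ℝ → ℝ := fun y => Real.exp (-y^2/4) *
  ((-y/2) * aeval y (hermite p) + aeval y (derivative (hermite p)))

lemma exp_hasDerivAt (y : ℝ) :
    HasDerivAt (fun y : ℝ => Real.exp (-y^2/4)) (Real.exp (-y^2/4) * (-y/2)) y := by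
  have h1 : HasDerivAt (fun y : ℝ => -y^2/4) (-y/2) y := by
    have := ((hasDerivAt_pow 2 y).neg).div_const 4
    refine this.congr_deriv ?_
    push_cast; ring
  exact h1.exp

lemma gg_hasDerivAt (p : ℕ) (y : ℝ) : HasDerivAt (gg p) (gg1 p y) y := by
  have := (exp_hasDerivAt y).mul (Polynomial.hasDerivAt_aeval (q := hermite p) y)
  refine this.congr_deriv ?_
  simp only [gg1]; ring

lemma gg1_hasDerivAt (p : ℕ) (y : ℝ) :
    HasDerivAt (gg1 p) ((y^2/4 - 1/2 - p) * gg p y) y := by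
  have hin : HasDerivAt (fun y : ℝ => (-y/2) * aeval y (hermite p) + aeval y (derivative (hermite p)))
      ((-1/2) * aeval y (hermite p) + (-y/2) * aeval y (derivative (hermite p)) +
        aeval y (derivative (derivative (hermite p)))) y := by
    have h := ((((hasDerivAt_id y).neg.div_const 2).mul
        (Polynomial.hasDerivAt_aeval (q := hermite p) y)).add
      (Polynomial.hasDerivAt_aeval (q := derivative (hermite p)) y))
    exact h.congr_deriv rfl
  have := (exp_hasDerivAt y).mul hin
  refine this.congr_deriv ?_
  have hode : (aeval y (derivative (derivative (hermite p))) : ℝ) =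
      y * aeval y (derivative (hermite p)) - p * aeval y (hermite p) := by
    rw [hermite_ode p]
    simp
  simp only [gg, gg1]
  rw [hode]
  ring


/-- eigenfunctions of the self-adjoint local operator `L̃_loc` of the
linearized mean-field game. The function
`f(u) = exp(−(u−ξ)²/(2√r·σ²))·He_p(√2(u−ξ)/(r^{1/4}σ))` is twice differentiable
and satisfies `(((u−ξ)² − √r·σ²)/(2rσ²))·f − (σ²/2)·f″ = (p/√r)·f`. -/
theorem mfg_local_operator_eigenfunction (σ r ξ : ℝ) (hσ : 0 < σ) (hr : 0 < r) (p : ℕ)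
    (f : ℝ → ℝ)
    (hf : ∀ u : ℝ, f u = Real.exp (-(u - ξ) ^ 2 / (2 * Real.sqrt r * σ ^ 2)) *
      aeval (Real.sqrt 2 * (u - ξ) / (r ^ ((1 : ℝ) / 4) * σ)) (hermite p)) :
    Differentiable ℝ f ∧ Differentiable ℝ (deriv f) ∧
    ∀ u : ℝ,
      (((u - ξ) ^ 2 - Real.sqrt r * σ ^ 2) / (2 * r * σ ^ 2)) * f u -
        (σ ^ 2 / 2) * deriv (deriv f) u =
      ((p : ℝ) / Real.sqrt r) * f u := by
  set s := Real.sqrt r with hs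
  have hs0 : 0 < s := Real.sqrt_pos.mpr hr
  have hs2 : s ^ 2 = r := Real.sq_sqrt hr.le
  have hq : 0 < r ^ ((1 : ℝ) / 4) := Real.rpow_pos_of_pos hr _
  have hq2 : (r ^ ((1 : ℝ) / 4)) ^ 2 = s := by
    rw [← Real.rpow_natCast (r ^ ((1 : ℝ) / 4)) 2, ← Real.rpow_mul hr.le, hs,
      Real.sqrt_eq_rpow]
    norm_num
  set b : ℝ := Real.sqrt 2 / (r ^ ((1 : ℝ) / 4) * σ) with hb
  have hb2 : b ^ 2 = 2 / (s * σ ^ 2) := by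
    rw [hb, div_pow, mul_pow, hq2, Real.sq_sqrt (by norm_num : (0:ℝ) ≤ 2)]
  -- f equals gg p composed with the affine map
  have hfg : ∀ u : ℝ, f u = gg p (b * (u - ξ)) := by
    intro u
    rw [hf u]
    simp only [gg]
    congr 1
    · congr 1
      rw [mul_pow, hb2]
      field_simp
      ring
    · rw [hb]; ring
  have hrw : f = fun u => gg p (b * (u - ξ)) := funext hfg
  have hinner : ∀ u : ℝ, HasDerivAt (fun u : ℝ => b * (u - ξ)) b u := by
    intro u
    simpa using ((hasDerivAt_id u).sub_const ξ).const_mul b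
  have hd1 : ∀ u : ℝ, HasDerivAt f (b * gg1 p (b * (u - ξ))) u := by
    intro u
    rw [hrw]
    exact ((gg_hasDerivAt p (b * (u - ξ))).comp u (hinner u)).congr_deriv (mul_comm _ _)
  have hderiv1 : deriv f = fun u => b * gg1 p (b * (u - ξ)) := by
    funext u; exact (hd1 u).deriv
  have hd2 : ∀ u : ℝ, HasDerivAt (deriv f)
      (b ^ 2 * (((b * (u - ξ)) ^ 2 / 4 - 1 / 2 - p) * gg p (b * (u - ξ)))) u := by
    intro u
    rw [hderiv1]
    have := ((gg1_hasDerivAt p (b * (u - ξ))).comp u (hinner u)).const_mul b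
    refine this.congr_deriv ?_
    ring
  refine ⟨fun u => (hd1 u).differentiableAt, fun u => (hd2 u).differentiableAt, fun u => ?_⟩
  rw [(hd2 u).deriv, hfg u, mul_pow, hb2]
  have hσ' : σ ≠ 0 := hσ.ne'
  have hs' : s ≠ 0 := hs0.ne'
  rw [← hs2]
  field_simp
  ring
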